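/- If (M_n)_{n∈ℕ} is an infinite sequence of EPCF programs with M_n →wh M_{n+1} for all n, then for every index i there exists j > i with M_i ↠wh M_j and M_i↓ →PCF M_j↓. Consequently, an EPCF program with an infinite weak head reduction path has a collapse with an infinite PCF reduction path. -/

import Mathlib

inductive Tm : Type
  | var : String → Tm
  | app : Tm → Tm → Tm
  | lam : String → Tm → Tm
  | fixp : Tm → Tm
  | esub : Tm → String → Tm → Tm
  | zero : Tm
  | pred : Tm → Tm
  | succ : Tm → Tm
  | ifz : Tm → Tm → Tm → Tm

/-- Numerals `n̲ = succⁿ 0`. -/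
def numeral : ℕ → Tm
  | 0 => Tm.zero
  | n + 1 => Tm.succ (numeral n)

/-- Free variables of an EPCF term. -/
def fv : Tm → Finset String
  | .var x => {x}
  | .app M N => fv M ∪ fv N
  | .lam x M => fv M \ {x}
  | .fixp M => fv M
  | .esub M x N => (fv M \ {x}) ∪ fv N
  | .zero => ∅
  | .pred M => fv M
  | .succ M => fv M
  | .ifz L M N => fv L ∪ fv M ∪ fv N

/-- Substitution `M[x := Q]` (capture-free whenever `Q` is closed, which is
the only situation in which it is used for programs). -/
def subst (x : String) (Q : Tm) : Tm → Tm
  | .var y => if y = x then Q else .var y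
  | .app M N => .app (subst x Q M) (subst x Q N)
  | .lam y M => if y = x then .lam y M else .lam y (subst x Q M)
  | .fixp M => .fixp (subst x Q M)
  | .esub M y N =>
      if y = x then .esub M y (subst x Q N)
      else .esub (subst x Q M) y (subst x Q N)
  | .zero => .zero
  | .pred M => .pred (subst x Q M)
  | .succ M => .succ (subst x Q M)
  | .ifz L M N => .ifz (subst x Q L) (subst x Q M) (subst x Q N)

/-- PCF terms are the EPCF terms without explicit substitutions. -/
def IsPCF : Tm → Prop
  | .var _ => True
  | .app M N => IsPCF M ∧ IsPCF N
  | .lam _ M => IsPCF M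
  | .fixp M => IsPCF M
  | .esub _ _ _ => False
  | .zero => True
  | .pred M => IsPCF M
  | .succ M => IsPCF M
  | .ifz L M N => IsPCF L ∧ IsPCF M ∧ IsPCF N

/-- All explicit substitutions occurring in the term have closed right-hand sides. -/
def closedSubs : Tm → Prop
  | .var _ => True
  | .app M N => closedSubs M ∧ closedSubs N
  | .lam _ M => closedSubs M
  | .fixp M => closedSubs M
  | .esub M _ N => closedSubs M ∧ closedSubs N ∧ fv N = ∅
  | .zero => True
  | .pred M => closedSubs M
  | .succ M => closedSubs M
  | .ifz L M N => closedSubs L ∧ closedSubs M ∧ closedSubs N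

/-- An EPCF program: closed, and all explicit substitutions have closed bodies. -/
def IsProgram (M : Tm) : Prop := fv M = ∅ ∧ closedSubs M

/-- The collapse `M↓`, performing all explicit substitutions. -/
def collapse : Tm → Tm
  | .var x => .var x
  | .app M N => .app (collapse M) (collapse N)
  | .lam x M => .lam x (collapse M)
  | .fixp M => .fixp (collapse M)
  | .esub M x N => subst x (collapse N) (collapse M)
  | .zero => .zero
  | .pred M => .pred (collapse M)
  | .succ M => .succ (collapse M)
  | .ifz L M N => .ifz (collapse L) (collapse M) (collapse N)

/-- Lists of explicit substitutions `σ = ⟨N₁/x₁⟩⋯⟨Nₙ/xₙ⟩`. -/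
abbrev Subs := List (String × Tm)

/-- `M^σ`: the term `M` under the list of explicit substitutions `σ`. -/
def applySubs (M : Tm) : Subs → Tm
  | [] => M
  | (x, N) :: σ => applySubs (.esub M x N) σ

def lookupS (x : String) : Subs → Option Tm
  | [] => none
  | (y, N) :: σ => if x = y then some N else lookupS x σ

/-- The variables in `σ` are pairwise distinct. -/
def keysDistinct (σ : Subs) : Prop := (σ.map Prod.fst).Nodup

/-- Computation redexes of EPCF. -/
inductive CrRedex : Tm → Tm → Prop
  | beta (x : String) (M N : Tm) (σ : Subs) (hk : keysDistinct σ) :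
      CrRedex (.app (applySubs (.lam x M) σ) N) (.esub (applySubs M σ) x N)
  | pred_zero : CrRedex (.pred .zero) .zero
  | pred_succ (n : ℕ) : CrRedex (.pred (numeral (n + 1))) (numeral n)
  | ifz_zero (M N : Tm) : CrRedex (.ifz .zero M N) M
  | ifz_succ (n : ℕ) (M N : Tm) : CrRedex (.ifz (numeral (n + 1)) M N) N
  | fix_unfold (M : Tm) : CrRedex (.fixp M) (.app M (.fixp M))

/-- Percolation redexes of EPCF (the list `σ` is non-empty). -/
inductive PrRedex : Tm → Tm → Prop
  | var_hit (x : String) (N : Tm) (σ : Subs) (hne : σ ≠ []) (hk : keysDistinct σ)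
      (h : lookupS x σ = some N) : PrRedex (applySubs (.var x) σ) N
  | var_miss (x : String) (σ : Subs) (hne : σ ≠ []) (hk : keysDistinct σ)
      (h : lookupS x σ = none) : PrRedex (applySubs (.var x) σ) (.var x)
  | zeroS (σ : Subs) (hne : σ ≠ []) (hk : keysDistinct σ) :
      PrRedex (applySubs .zero σ) .zero
  | appS (M N : Tm) (σ : Subs) (hne : σ ≠ []) (hk : keysDistinct σ) :
      PrRedex (applySubs (.app M N) σ) (.app (applySubs M σ) (applySubs N σ))
  | predS (M : Tm) (σ : Subs) (hne : σ ≠ []) (hk : keysDistinct σ) :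
      PrRedex (applySubs (.pred M) σ) (.pred (applySubs M σ))
  | succS (M : Tm) (σ : Subs) (hne : σ ≠ []) (hk : keysDistinct σ) :
      PrRedex (applySubs (.succ M) σ) (.succ (applySubs M σ))
  | ifzS (L M N : Tm) (σ : Subs) (hne : σ ≠ []) (hk : keysDistinct σ) :
      PrRedex (applySubs (.ifz L M N) σ)
        (.ifz (applySubs L σ) (applySubs M σ) (applySubs N σ))
  | fixS (M : Tm) (σ : Subs) (hne : σ ≠ []) (hk : keysDistinct σ) :
      PrRedex (applySubs (.fixp M) σ) (.fixp (applySubs M σ))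

/-- Evaluation contexts `E ::= □ | E·P | pred E | succ E | ifz E P Q`. -/
inductive ECtx : Type
  | hole : ECtx
  | appL : ECtx → Tm → ECtx
  | pred : ECtx → ECtx
  | succ : ECtx → ECtx
  | ifz : ECtx → Tm → Tm → ECtx

def fill : ECtx → Tm → Tm
  | .hole, M => M
  | .appL E P, M => .app (fill E M) P
  | .pred E, M => .pred (fill E M)
  | .succ E, M => .succ (fill E M)
  | .ifz E P Q, M => .ifz (fill E M) P Q

/-- One computation reduction step (under an evaluation context). -/
def CrStep (M N : Tm) : Prop :=
  ∃ E A B, CrRedex A B ∧ M = fill E A ∧ N = fill E B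

/-- One percolation reduction step (under an evaluation context). -/
def PrStep (M N : Tm) : Prop :=
  ∃ E A B, PrRedex A B ∧ M = fill E A ∧ N = fill E B

/-- One weak head reduction step. -/
def WhStep (M N : Tm) : Prop := CrStep M N ∨ PrStep M N

/-- Multistep weak head reduction. -/
def WhSteps : Tm → Tm → Prop := Relation.ReflTransGen WhStep

/-- PCF weak head redexes. -/
inductive PcfRedex : Tm → Tm → Prop
  | beta (x : String) (P Q : Tm) : PcfRedex (.app (.lam x P) Q) (subst x Q P)
  | fix_unfold (P : Tm) : PcfRedex (.fixp P) (.app P (.fixp P))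
  | pred_zero : PcfRedex (.pred .zero) .zero
  | pred_succ (n : ℕ) : PcfRedex (.pred (numeral (n + 1))) (numeral n)
  | ifz_zero (P Q : Tm) : PcfRedex (.ifz .zero P Q) P
  | ifz_succ (n : ℕ) (P Q : Tm) : PcfRedex (.ifz (numeral (n + 1)) P Q) Q

/-- One PCF weak head reduction step. -/
def PcfStep (M N : Tm) : Prop :=
  ∃ E A B, PcfRedex A B ∧ M = fill E A ∧ N = fill E B

/-- Multistep PCF weak head reduction. -/
def PcfSteps : Tm → Tm → Prop := Relation.ReflTransGen PcfStep


/-! ### Auxiliary development -/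

section Aux

/-- Size measure strictly decreased by percolation. -/
def W : Tm → ℕ
  | .var _ => 1
  | .app M N => W M + W N + 1
  | .lam _ M => W M + 1
  | .fixp M => W M + 1
  | .esub M _ N => W M * (W N + 1)
  | .zero => 1
  | .pred M => W M + 1
  | .succ M => W M + 1
  | .ifz L M N => W L + W M + W N + 1

lemma W_pos (M : Tm) : 1 ≤ W M := by
  induction M with
  | esub M x N ihM ihN => exact Nat.mul_pos ihM (Nat.succ_pos _)
  | var x => simp [W]
  | zero => simp [W]
  | app M N ihM ihN => simp [W]
  | lam x M ih => simp [W]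
  | fixp M ih => simp [W]
  | pred M ih => simp [W]
  | succ M ih => simp [W]
  | ifz L M N ihL ihM ihN => simp [W]

def PP (σ : Subs) : ℕ := (σ.map (fun p => W p.2 + 1)).prod

lemma PP_nil : PP [] = 1 := rfl

lemma PP_cons (p : String × Tm) (σ : Subs) : PP (p :: σ) = (W p.2 + 1) * PP σ := by
  simp [PP]

lemma PP_pos (σ : Subs) : 1 ≤ PP σ := by
  induction σ with
  | nil => simp [PP]
  | cons p σ ih =>
    rw [PP_cons]
    calc 1 ≤ PP σ := ih
    _ ≤ (W p.2 + 1) * PP σ := Nat.le_mul_of_pos_left _ (by omega)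

lemma PP_two (σ : Subs) (h : σ ≠ []) : 2 ≤ PP σ := by
  cases σ with
  | nil => exact absurd rfl h
  | cons p σ =>
    rw [PP_cons]
    have h1 := W_pos p.2
    have h2 := PP_pos σ
    nlinarith

lemma PP_mem {p : String × Tm} : ∀ {σ : Subs}, p ∈ σ → W p.2 + 1 ≤ PP σ := by
  intro σ
  induction σ with
  | nil => intro h; simp at h
  | cons q σ ih =>
    intro h
    rw [PP_cons]
    rcases List.mem_cons.1 h with rfl | h
    · calc W p.2 + 1 = (W p.2 + 1) * 1 := by ring
      _ ≤ (W p.2 + 1) * PP σ := Nat.mul_le_mul_left _ (PP_pos σ)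
    · calc W p.2 + 1 ≤ PP σ := ih h
      _ ≤ (W q.2 + 1) * PP σ := Nat.le_mul_of_pos_left _ (by omega)

lemma W_applySubs : ∀ (σ : Subs) (M : Tm), W (applySubs M σ) = W M * PP σ := by
  intro σ
  induction σ with
  | nil => intro M; simp [applySubs, PP]
  | cons p σ ih =>
    intro M
    obtain ⟨x, N⟩ := p
    show W (applySubs (.esub M x N) σ) = W M * PP ((x, N) :: σ)
    rw [ih, PP_cons]
    show W M * (W N + 1) * PP σ = W M * ((W N + 1) * PP σ)
    ring

lemma lookupS_mem {x : String} {N : Tm} : ∀ {σ : Subs}, lookupS x σ = some N → (x, N) ∈ σ := by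
  intro σ
  induction σ with
  | nil => intro h; simp [lookupS] at h
  | cons p σ ih =>
    intro h
    obtain ⟨y, P⟩ := p
    by_cases hxy : x = y
    · rw [lookupS, if_pos hxy] at h
      injection h with h
      subst h; subst hxy
      exact List.mem_cons_self
    · rw [lookupS, if_neg hxy] at h
      exact List.mem_cons_of_mem _ (ih h)

lemma prRedex_W {A B : Tm} (h : PrRedex A B) : W B < W A := by
  cases h with
  | var_hit x N σ hne hk hl =>
    have h1 : W (x, B).2 + 1 ≤ PP σ := PP_mem (lookupS_mem hl)
    rw [W_applySubs]
    show W B < W (.var x) * PP σ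
    simp only [W] at h1 ⊢
    omega
  | var_miss x σ hne hk hl =>
    rw [W_applySubs]
    have := PP_two σ hne
    show W (.var x) < W (.var x) * PP σ
    simp only [W]; omega
  | zeroS σ hne hk =>
    rw [W_applySubs]
    have := PP_two σ hne
    show W (.zero) < W (.zero) * PP σ
    simp only [W]; omega
  | appS M N σ hne hk =>
    rw [W_applySubs]
    have h2 := PP_two σ hne
    show W (.app (applySubs M σ) (applySubs N σ)) < W (.app M N) * PP σ
    simp only [W, W_applySubs]
    nlinarith [W_pos M, W_pos N]
  | predS M σ hne hk =>
    rw [W_applySubs]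
    have h2 := PP_two σ hne
    show W (.pred (applySubs M σ)) < W (.pred M) * PP σ
    simp only [W, W_applySubs]
    nlinarith [W_pos M]
  | succS M σ hne hk =>
    rw [W_applySubs]
    have h2 := PP_two σ hne
    show W (.succ (applySubs M σ)) < W (.succ M) * PP σ
    simp only [W, W_applySubs]
    nlinarith [W_pos M]
  | ifzS L M N σ hne hk =>
    rw [W_applySubs]
    have h2 := PP_two σ hne
    show W (.ifz (applySubs L σ) (applySubs M σ) (applySubs N σ)) < W (.ifz L M N) * PP σ
    simp only [W, W_applySubs]
    nlinarith [W_pos L, W_pos M, W_pos N]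
  | fixS M σ hne hk =>
    rw [W_applySubs]
    have h2 := PP_two σ hne
    show W (.fixp (applySubs M σ)) < W (.fixp M) * PP σ
    simp only [W, W_applySubs]
    nlinarith [W_pos M]

lemma W_fill {A B : Tm} (h : W B < W A) : ∀ E : ECtx, W (fill E B) < W (fill E A) := by
  intro E
  induction E with
  | hole => exact h
  | appL E P ih => simp only [fill, W]; omega
  | pred E ih => simp only [fill, W]; omega
  | succ E ih => simp only [fill, W]; omega
  | ifz E P Q ih => simp only [fill, W]; omega

lemma prStep_W {M N : Tm} (h : PrStep M N) : W N < W M := by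
  obtain ⟨E, A, B, hr, rfl, rfl⟩ := h
  exact W_fill (prRedex_W hr) E

/-! ### Substitution and collapse lemmas -/

lemma subst_not_free {x : String} {Q : Tm} : ∀ {M : Tm}, x ∉ fv M → subst x Q M = M := by
  intro M
  induction M with
  | var y =>
    intro h
    simp only [fv, Finset.mem_singleton] at h
    simp only [subst]
    rw [if_neg (fun hyx => h hyx.symm)]
  | app M N ihM ihN =>
    intro h
    simp only [fv, Finset.mem_union, not_or] at h
    simp only [subst, ihM h.1, ihN h.2]
  | lam y M ih =>
    intro h
    simp only [fv, Finset.mem_sdiff, Finset.mem_singleton, not_and, not_not] at h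
    by_cases hyx : y = x
    · simp only [subst, if_pos hyx]
    · have hxM : x ∉ fv M := fun hx => hyx ((h hx).symm)
      simp only [subst, if_neg hyx, ih hxM]
  | fixp M ih =>
    intro h
    simp only [fv] at h
    simp only [subst, ih h]
  | esub M y N ihM ihN =>
    intro h
    simp only [fv, Finset.mem_union, Finset.mem_sdiff, Finset.mem_singleton, not_or, not_and,
      not_not] at h
    by_cases hyx : y = x
    · simp only [subst, if_pos hyx, ihN h.2]
    · have hxM : x ∉ fv M := fun hx => hyx ((h.1 hx).symm)
      simp only [subst, if_neg hyx, ihM hxM, ihN h.2]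
  | zero => intro h; rfl
  | pred M ih =>
    intro h
    simp only [fv] at h
    simp only [subst, ih h]
  | succ M ih =>
    intro h
    simp only [fv] at h
    simp only [subst, ih h]
  | ifz L M N ihL ihM ihN =>
    intro h
    simp only [fv, Finset.mem_union, not_or] at h
    simp only [subst, ihL h.1.1, ihM h.1.2, ihN h.2]

lemma mem_fv_subst {x a : String} {Q : Tm} :
    ∀ {M : Tm}, a ∈ fv (subst x Q M) → (a ∈ fv M ∧ a ≠ x) ∨ a ∈ fv Q := by
  intro M
  induction M with
  | var y =>
    intro h
    simp only [subst] at h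
    by_cases hyx : y = x
    · rw [if_pos hyx] at h; exact .inr h
    · rw [if_neg hyx] at h
      simp only [fv, Finset.mem_singleton] at h
      subst h
      exact .inl ⟨by simp [fv], fun hax => hyx hax⟩
  | app M N ihM ihN =>
    intro h
    simp only [subst, fv, Finset.mem_union] at h ⊢
    rcases h with h | h
    · rcases ihM h with ⟨h1, h2⟩ | h1
      · exact .inl ⟨.inl h1, h2⟩
      · exact .inr h1
    · rcases ihN h with ⟨h1, h2⟩ | h1
      · exact .inl ⟨.inr h1, h2⟩
      · exact .inr h1
  | lam y M ih =>
    intro h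
    simp only [subst] at h
    by_cases hyx : y = x
    · rw [if_pos hyx] at h
      subst hyx
      simp only [fv, Finset.mem_sdiff, Finset.mem_singleton] at h
      exact .inl ⟨by simp [fv, h.1, h.2], h.2⟩
    · rw [if_neg hyx] at h
      simp only [fv, Finset.mem_sdiff, Finset.mem_singleton] at h ⊢
      rcases ih h.1 with ⟨h1, h2⟩ | h1
      · exact .inl ⟨⟨h1, h.2⟩, h2⟩
      · exact .inr h1
  | fixp M ih =>
    intro h
    simp only [subst, fv] at h ⊢
    exact ih h
  | esub M y N ihM ihN =>
    intro h
    simp only [subst] at h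
    by_cases hyx : y = x
    · rw [if_pos hyx] at h
      subst hyx
      simp only [fv, Finset.mem_union, Finset.mem_sdiff, Finset.mem_singleton] at h ⊢
      rcases h with ⟨h1, h2⟩ | h1
      · exact .inl ⟨.inl ⟨h1, h2⟩, h2⟩
      · rcases ihN h1 with ⟨h1, h2⟩ | h1
        · exact .inl ⟨.inr h1, h2⟩
        · exact .inr h1
    · rw [if_neg hyx] at h
      simp only [fv, Finset.mem_union, Finset.mem_sdiff, Finset.mem_singleton] at h ⊢
      rcases h with ⟨h1, h2⟩ | h1
      · rcases ihM h1 with ⟨h3, h4⟩ | h3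
        · exact .inl ⟨.inl ⟨h3, h2⟩, h4⟩
        · exact .inr h3
      · rcases ihN h1 with ⟨h3, h4⟩ | h3
        · exact .inl ⟨.inr h3, h4⟩
        · exact .inr h3
  | zero => intro h; simp [subst, fv] at h
  | pred M ih =>
    intro h
    simp only [subst, fv] at h ⊢
    exact ih h
  | succ M ih =>
    intro h
    simp only [subst, fv] at h ⊢
    exact ih h
  | ifz L M N ihL ihM ihN =>
    intro h
    simp only [subst, fv, Finset.mem_union] at h ⊢
    rcases h with (h | h) | h
    · rcases ihL h with ⟨h1, h2⟩ | h1
      · exact .inl ⟨.inl (.inl h1), h2⟩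
      · exact .inr h1
    · rcases ihM h with ⟨h1, h2⟩ | h1
      · exact .inl ⟨.inl (.inr h1), h2⟩
      · exact .inr h1
    · rcases ihN h with ⟨h1, h2⟩ | h1
      · exact .inl ⟨.inr h1, h2⟩
      · exact .inr h1

lemma mem_fv_collapse {a : String} : ∀ {M : Tm}, a ∈ fv (collapse M) → a ∈ fv M := by
  intro M
  induction M with
  | var y => intro h; exact h
  | app M N ihM ihN =>
    intro h
    simp only [collapse, fv, Finset.mem_union] at h ⊢
    rcases h with h | h
    exacts [.inl (ihM h), .inr (ihN h)]
  | lam y M ih =>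
    intro h
    simp only [collapse, fv, Finset.mem_sdiff] at h ⊢
    exact ⟨ih h.1, h.2⟩
  | fixp M ih =>
    intro h
    simp only [collapse, fv] at h ⊢
    exact ih h
  | esub M y N ihM ihN =>
    intro h
    simp only [collapse] at h
    simp only [fv, Finset.mem_union, Finset.mem_sdiff, Finset.mem_singleton]
    rcases mem_fv_subst h with ⟨h1, h2⟩ | h1
    · exact .inl ⟨ihM h1, h2⟩
    · exact .inr (ihN h1)
  | zero => intro h; exact h
  | pred M ih =>
    intro h
    simp only [collapse, fv] at h ⊢
    exact ih h
  | succ M ih =>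
    intro h
    simp only [collapse, fv] at h ⊢
    exact ih h
  | ifz L M N ihL ihM ihN =>
    intro h
    simp only [collapse, fv, Finset.mem_union] at h ⊢
    rcases h with (h | h) | h
    exacts [.inl (.inl (ihL h)), .inl (.inr (ihM h)), .inr (ihN h)]

lemma collapse_closed {M : Tm} (h : fv M = ∅) : fv (collapse M) = ∅ := by
  rw [Finset.eq_empty_iff_forall_notMem]
  intro a ha
  have := mem_fv_collapse ha
  rw [h] at this
  simp at this

/-- Iterated meta-substitution corresponding to a list of explicit substitutions. -/
def csub (σ : Subs) (P : Tm) : Tm := σ.foldl (fun P p => subst p.1 (collapse p.2) P) P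

lemma csub_nil (P : Tm) : csub [] P = P := rfl

lemma csub_cons (p : String × Tm) (σ : Subs) (P : Tm) :
    csub (p :: σ) P = csub σ (subst p.1 (collapse p.2) P) := rfl

lemma collapse_applySubs : ∀ (σ : Subs) (M : Tm), collapse (applySubs M σ) = csub σ (collapse M) := by
  intro σ
  induction σ with
  | nil => intro M; rfl
  | cons p σ ih =>
    intro M
    obtain ⟨x, N⟩ := p
    show collapse (applySubs (.esub M x N) σ) = csub ((x, N) :: σ) (collapse M)
    rw [ih]
    rfl

lemma csub_app (σ : Subs) : ∀ P Q, csub σ (.app P Q) = .app (csub σ P) (csub σ Q) := by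
  induction σ with
  | nil => intro P Q; rfl
  | cons p σ ih => intro P Q; simp only [csub_cons, subst]; exact ih _ _

lemma csub_zero (σ : Subs) : csub σ .zero = .zero := by
  induction σ with
  | nil => rfl
  | cons p σ ih => simp only [csub_cons, subst]; exact ih

lemma csub_pred (σ : Subs) : ∀ P, csub σ (.pred P) = .pred (csub σ P) := by
  induction σ with
  | nil => intro P; rfl
  | cons p σ ih => intro P; simp only [csub_cons, subst]; exact ih _

lemma csub_succ (σ : Subs) : ∀ P, csub σ (.succ P) = .succ (csub σ P) := by
  induction σ with
  | nil => intro P; rfl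
  | cons p σ ih => intro P; simp only [csub_cons, subst]; exact ih _

lemma csub_ifz (σ : Subs) : ∀ L P Q, csub σ (.ifz L P Q) = .ifz (csub σ L) (csub σ P) (csub σ Q) := by
  induction σ with
  | nil => intro L P Q; rfl
  | cons p σ ih => intro L P Q; simp only [csub_cons, subst]; exact ih _ _ _

lemma csub_fixp (σ : Subs) : ∀ P, csub σ (.fixp P) = .fixp (csub σ P) := by
  induction σ with
  | nil => intro P; rfl
  | cons p σ ih => intro P; simp only [csub_cons, subst]; exact ih _

lemma csub_lam (x : String) : ∀ (σ : Subs), x ∉ σ.map Prod.fst →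
    ∀ P, csub σ (.lam x P) = .lam x (csub σ P) := by
  intro σ
  induction σ with
  | nil => intro _ P; rfl
  | cons p σ ih =>
    intro h P
    simp only [List.map_cons, List.mem_cons, not_or] at h
    simp only [csub_cons, subst, if_neg h.1]
    exact ih h.2 _

lemma csub_closed : ∀ (σ : Subs) (P : Tm), fv P = ∅ → csub σ P = P := by
  intro σ
  induction σ with
  | nil => intro P _; rfl
  | cons p σ ih =>
    intro P h
    rw [csub_cons, subst_not_free (by simp [h])]
    exact ih P h

lemma csub_var_hit : ∀ (σ : Subs) (x : String) (N : Tm), lookupS x σ = some N →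
    (∀ p ∈ σ, fv p.2 = ∅) → csub σ (.var x) = collapse N := by
  intro σ
  induction σ with
  | nil => intro x N h _; simp [lookupS] at h
  | cons p σ ih =>
    intro x N h hcl
    obtain ⟨y, P⟩ := p
    by_cases hxy : x = y
    · rw [lookupS, if_pos hxy] at h
      injection h with h
      subst h
      rw [csub_cons]
      show csub σ (if x = y then collapse P else .var x) = collapse P
      rw [if_pos hxy]
      exact csub_closed σ _ (collapse_closed (hcl (y, P) (List.mem_cons_self)))
    · rw [lookupS, if_neg hxy] at h
      rw [csub_cons]
      show csub σ (if x = y then collapse P else .var x) = collapse N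
      rw [if_neg hxy]
      exact ih x N h (fun q hq => hcl q (List.mem_cons_of_mem _ hq))

lemma csub_var_none : ∀ (σ : Subs) (x : String), lookupS x σ = none → csub σ (.var x) = .var x := by
  intro σ
  induction σ with
  | nil => intro x _; rfl
  | cons p σ ih =>
    intro x h
    obtain ⟨y, P⟩ := p
    by_cases hxy : x = y
    · rw [lookupS, if_pos hxy] at h; simp at h
    · rw [lookupS, if_neg hxy] at h
      rw [csub_cons]
      show csub σ (if x = y then collapse P else .var x) = .var x
      rw [if_neg hxy]
      exact ih x h

lemma closedSubs_applySubs : ∀ (σ : Subs) (M : Tm), closedSubs (applySubs M σ) →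
    closedSubs M ∧ ∀ p ∈ σ, fv p.2 = ∅ := by
  intro σ
  induction σ with
  | nil => intro M h; exact ⟨h, by simp⟩
  | cons p σ ih =>
    intro M h
    obtain ⟨x, N⟩ := p
    have h' := ih (.esub M x N) h
    obtain ⟨h1, h2⟩ := h'
    simp only [closedSubs] at h1
    refine ⟨h1.1, ?_⟩
    intro q hq
    rcases List.mem_cons.1 hq with rfl | hq
    · exact h1.2.2
    · exact h2 q hq

lemma closedSubs_fill : ∀ (E : ECtx) (A : Tm), closedSubs (fill E A) → closedSubs A := by
  intro E
  induction E with
  | hole => intro A h; exact h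
  | appL E P ih => intro A h; exact ih A h.1
  | pred E ih => intro A h; exact ih A h
  | succ E ih => intro A h; exact ih A h
  | ifz E P Q ih => intro A h; exact ih A h.1

/-- Collapse of an evaluation context. -/
def cE : ECtx → ECtx
  | .hole => .hole
  | .appL E P => .appL (cE E) (collapse P)
  | .pred E => .pred (cE E)
  | .succ E => .succ (cE E)
  | .ifz E P Q => .ifz (cE E) (collapse P) (collapse Q)

lemma collapse_fill : ∀ (E : ECtx) (A : Tm), collapse (fill E A) = fill (cE E) (collapse A) := by
  intro E
  induction E with
  | hole => intro A; rfl
  | appL E P ih => intro A; simp only [fill, cE, collapse, ih]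
  | pred E ih => intro A; simp only [fill, cE, collapse, ih]
  | succ E ih => intro A; simp only [fill, cE, collapse, ih]
  | ifz E P Q ih => intro A; simp only [fill, cE, collapse, ih]

lemma collapse_numeral (n : ℕ) : collapse (numeral n) = numeral n := by
  induction n with
  | zero => rfl
  | succ n ih => simp only [numeral, collapse, ih]

lemma pr_collapse {A B : Tm} (h : PrRedex A B) (hc : closedSubs A) : collapse A = collapse B := by
  cases h with
  | var_hit x N σ hne hk hl =>
    rw [collapse_applySubs]
    show csub σ (.var x) = collapse B
    exact csub_var_hit σ x B hl (closedSubs_applySubs σ _ hc).2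
  | var_miss x σ hne hk hl =>
    rw [collapse_applySubs]
    show csub σ (.var x) = collapse (.var x)
    exact csub_var_none σ x hl
  | zeroS σ hne hk =>
    rw [collapse_applySubs]
    exact csub_zero σ
  | appS M N σ hne hk =>
    rw [collapse_applySubs]
    show csub σ (.app (collapse M) (collapse N)) = _
    rw [csub_app]
    show _ = Tm.app (collapse (applySubs M σ)) (collapse (applySubs N σ))
    rw [collapse_applySubs, collapse_applySubs]
  | predS M σ hne hk =>
    rw [collapse_applySubs]
    show csub σ (.pred (collapse M)) = _
    rw [csub_pred]
    show _ = Tm.pred (collapse (applySubs M σ))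
    rw [collapse_applySubs]
  | succS M σ hne hk =>
    rw [collapse_applySubs]
    show csub σ (.succ (collapse M)) = _
    rw [csub_succ]
    show _ = Tm.succ (collapse (applySubs M σ))
    rw [collapse_applySubs]
  | ifzS L M N σ hne hk =>
    rw [collapse_applySubs]
    show csub σ (.ifz (collapse L) (collapse M) (collapse N)) = _
    rw [csub_ifz]
    show _ = Tm.ifz (collapse (applySubs L σ)) (collapse (applySubs M σ)) (collapse (applySubs N σ))
    rw [collapse_applySubs, collapse_applySubs, collapse_applySubs]
  | fixS M σ hne hk =>
    rw [collapse_applySubs]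
    show csub σ (.fixp (collapse M)) = _
    rw [csub_fixp]
    show _ = Tm.fixp (collapse (applySubs M σ))
    rw [collapse_applySubs]

lemma prStep_collapse {M N : Tm} (h : PrStep M N) (hc : closedSubs M) : collapse M = collapse N := by
  obtain ⟨E, A, B, hr, rfl, rfl⟩ := h
  rw [collapse_fill, collapse_fill, pr_collapse hr (closedSubs_fill E A hc)]

/-! ### Spines and stuck terms -/

def spineOf : Tm → Subs
  | .esub M x N => spineOf M ++ [(x, N)]
  | _ => []

def Bad (T : Tm) : Prop := ¬ ((spineOf T).map Prod.fst).Nodup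

lemma spineOf_applySubs : ∀ (σ : Subs) (M : Tm), spineOf (applySubs M σ) = spineOf M ++ σ := by
  intro σ
  induction σ with
  | nil => intro M; simp [applySubs]
  | cons p σ ih =>
    intro M
    obtain ⟨x, N⟩ := p
    show spineOf (applySubs (.esub M x N) σ) = spineOf M ++ ((x, N) :: σ)
    rw [ih]
    simp [spineOf]

lemma bad_esub : ∀ {T : Tm}, Bad T → ∃ M x N, T = Tm.esub M x N := by
  intro T hB
  cases T with
  | esub M x N => exact ⟨M, x, N, rfl⟩
  | var x => exact (hB (by simp [spineOf])).elim
  | app M N => exact (hB (by simp [spineOf])).elim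
  | lam x M => exact (hB (by simp [spineOf])).elim
  | fixp M => exact (hB (by simp [spineOf])).elim
  | zero => exact (hB (by simp [spineOf])).elim
  | pred M => exact (hB (by simp [spineOf])).elim
  | succ M => exact (hB (by simp [spineOf])).elim
  | ifz L M N => exact (hB (by simp [spineOf])).elim

lemma applySubs_esub : ∀ (σ : Subs), σ ≠ [] → ∀ H : Tm, ∃ M x N, applySubs H σ = Tm.esub M x N := by
  intro σ
  induction σ with
  | nil => intro h; exact absurd rfl h
  | cons p σ ih =>
    intro _ H
    obtain ⟨x, N⟩ := p
    by_cases hσ : σ = []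
    · subst hσ; exact ⟨H, x, N, rfl⟩
    · exact ih hσ (.esub H x N)

lemma pr_root_esub {A B : Tm} (h : PrRedex A B) : ∃ M x N, A = Tm.esub M x N := by
  cases h with
  | var_hit x N σ hne hk hl => exact applySubs_esub σ hne _
  | var_miss x σ hne hk hl => exact applySubs_esub σ hne _
  | zeroS σ hne hk => exact applySubs_esub σ hne _
  | appS M N σ hne hk => exact applySubs_esub σ hne _
  | predS M σ hne hk => exact applySubs_esub σ hne _
  | succS M σ hne hk => exact applySubs_esub σ hne _
  | ifzS L M N σ hne hk => exact applySubs_esub σ hne _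
  | fixS M σ hne hk => exact applySubs_esub σ hne _

lemma redex_spine_nodup {A B : Tm} (hr : CrRedex A B ∨ PrRedex A B) :
    ((spineOf A).map Prod.fst).Nodup := by
  rcases hr with h | h
  · cases h <;> simp [spineOf]
  · cases h <;> (rw [spineOf_applySubs]; simp only [spineOf, List.nil_append]; assumption)

lemma fill_comparable : ∀ (E E' : ECtx) (M M' : Tm), fill E M = fill E' M' →
    (∃ E₀, M = fill E₀ M') ∨ (∃ E₀, M' = fill E₀ M) := by
  intro E
  induction E with
  | hole => intro E' M M' h; exact .inl ⟨E', h⟩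
  | appL E P ih =>
    intro E' M M' h
    cases E' with
    | hole => exact .inr ⟨.appL E P, h.symm⟩
    | appL E₁ P₁ =>
      simp only [fill] at h
      injection h with h1 h2
      exact ih E₁ M M' h1
    | pred E₁ => simp only [fill] at h; exact Tm.noConfusion h
    | succ E₁ => simp only [fill] at h; exact Tm.noConfusion h
    | ifz E₁ P₁ Q₁ => simp only [fill] at h; exact Tm.noConfusion h
  | pred E ih =>
    intro E' M M' h
    cases E' with
    | hole => exact .inr ⟨.pred E, h.symm⟩
    | appL E₁ P₁ => simp only [fill] at h; exact Tm.noConfusion h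
    | pred E₁ =>
      simp only [fill] at h
      injection h with h1
      exact ih E₁ M M' h1
    | succ E₁ => simp only [fill] at h; exact Tm.noConfusion h
    | ifz E₁ P₁ Q₁ => simp only [fill] at h; exact Tm.noConfusion h
  | succ E ih =>
    intro E' M M' h
    cases E' with
    | hole => exact .inr ⟨.succ E, h.symm⟩
    | appL E₁ P₁ => simp only [fill] at h; exact Tm.noConfusion h
    | pred E₁ => simp only [fill] at h; exact Tm.noConfusion h
    | succ E₁ =>
      simp only [fill] at h
      injection h with h1
      exact ih E₁ M M' h1
    | ifz E₁ P₁ Q₁ => simp only [fill] at h; exact Tm.noConfusion h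
  | ifz E P Q ih =>
    intro E' M M' h
    cases E' with
    | hole => exact .inr ⟨.ifz E P Q, h.symm⟩
    | appL E₁ P₁ => simp only [fill] at h; exact Tm.noConfusion h
    | pred E₁ => simp only [fill] at h; exact Tm.noConfusion h
    | succ E₁ => simp only [fill] at h; exact Tm.noConfusion h
    | ifz E₁ P₁ Q₁ =>
      simp only [fill] at h
      injection h with h1 h2 h3
      exact ih E₁ M M' h1

lemma fill_esub_ne_numeral {M₀ : Tm} {x₀ : String} {N₀ : Tm} :
    ∀ (n : ℕ) (E : ECtx), fill E (Tm.esub M₀ x₀ N₀) ≠ numeral n := by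
  intro n
  induction n with
  | zero =>
    intro E h
    cases E <;> simp [fill, numeral] at h
  | succ n ih =>
    intro E h
    cases E with
    | succ E₁ =>
      simp only [fill, numeral] at h
      injection h with h1
      exact ih E₁ h1
    | hole => simp [fill, numeral] at h
    | appL E₁ P₁ => simp [fill, numeral] at h
    | pred E₁ => simp [fill, numeral] at h
    | ifz E₁ P₁ Q₁ => simp [fill, numeral] at h

lemma fill_bad_ne_lamSubs {Bt : Tm} (hB : Bad Bt) :
    ∀ (E : ECtx) (x : String) (M : Tm) (σ : Subs), keysDistinct σ →
      fill E Bt ≠ applySubs (.lam x M) σ := by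
  intro E x M σ hk h
  cases E with
  | hole =>
    have hs : spineOf Bt = σ := by
      show spineOf (fill .hole Bt) = σ
      rw [h, spineOf_applySubs]
      simp [spineOf]
    exact hB (by rw [hs]; exact hk)
  | appL E₁ P₁ =>
    rcases σ with _ | ⟨p, σ'⟩
    · simp only [applySubs, fill] at h; exact Tm.noConfusion h
    · obtain ⟨M', y', N', h2⟩ := applySubs_esub (p :: σ') (by simp) (Tm.lam x M)
      rw [h2] at h
      simp only [fill] at h
      exact Tm.noConfusion h
  | pred E₁ =>
    rcases σ with _ | ⟨p, σ'⟩
    · simp only [applySubs, fill] at h; exact Tm.noConfusion h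
    · obtain ⟨M', y', N', h2⟩ := applySubs_esub (p :: σ') (by simp) (Tm.lam x M)
      rw [h2] at h
      simp only [fill] at h
      exact Tm.noConfusion h
  | succ E₁ =>
    rcases σ with _ | ⟨p, σ'⟩
    · simp only [applySubs, fill] at h; exact Tm.noConfusion h
    · obtain ⟨M', y', N', h2⟩ := applySubs_esub (p :: σ') (by simp) (Tm.lam x M)
      rw [h2] at h
      simp only [fill] at h
      exact Tm.noConfusion h
  | ifz E₁ P₁ Q₁ =>
    rcases σ with _ | ⟨p, σ'⟩
    · simp only [applySubs, fill] at h; exact Tm.noConfusion h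
    · obtain ⟨M', y', N', h2⟩ := applySubs_esub (p :: σ') (by simp) (Tm.lam x M)
      rw [h2] at h
      simp only [fill] at h
      exact Tm.noConfusion h

lemma redex_not_bad {A B' Bt : Tm} (hr : CrRedex A B' ∨ PrRedex A B') (hB : Bad Bt) :
    ∀ E₀ : ECtx, A ≠ fill E₀ Bt := by
  obtain ⟨Mb, xb, Nb, rfl⟩ := bad_esub hB
  intro E₀ heq
  cases E₀ with
  | hole =>
    simp only [fill] at heq
    subst heq
    exact hB (redex_spine_nodup hr)
  | appL E₁ P₁ =>
    simp only [fill] at heq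
    rcases hr with hcr | hpr
    · cases hcr with
      | beta x M N σ hk =>
        injection heq with h1 h2
        exact fill_bad_ne_lamSubs hB E₁ x M σ hk h1.symm
      | pred_zero => exact Tm.noConfusion heq
      | pred_succ n => exact Tm.noConfusion heq
      | ifz_zero M N => exact Tm.noConfusion heq
      | ifz_succ n M N => exact Tm.noConfusion heq
      | fix_unfold M => exact Tm.noConfusion heq
    · obtain ⟨M', x', N', hA⟩ := pr_root_esub hpr
      rw [hA] at heq
      exact Tm.noConfusion heq
  | pred E₁ =>
    simp only [fill] at heq
    rcases hr with hcr | hpr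
    · cases hcr with
      | beta x M N σ hk => exact Tm.noConfusion heq
      | pred_zero =>
        injection heq with h1
        exact fill_esub_ne_numeral 0 E₁ (by rw [numeral]; exact h1.symm)
      | pred_succ n =>
        injection heq with h1
        exact fill_esub_ne_numeral (n + 1) E₁ h1.symm
      | ifz_zero M N => exact Tm.noConfusion heq
      | ifz_succ n M N => exact Tm.noConfusion heq
      | fix_unfold M => exact Tm.noConfusion heq
    · obtain ⟨M', x', N', hA⟩ := pr_root_esub hpr
      rw [hA] at heq
      exact Tm.noConfusion heq
  | succ E₁ =>
    simp only [fill] at heq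
    rcases hr with hcr | hpr
    · cases hcr with
      | beta x M N σ hk => exact Tm.noConfusion heq
      | pred_zero => exact Tm.noConfusion heq
      | pred_succ n => exact Tm.noConfusion heq
      | ifz_zero M N => exact Tm.noConfusion heq
      | ifz_succ n M N => exact Tm.noConfusion heq
      | fix_unfold M => exact Tm.noConfusion heq
    · obtain ⟨M', x', N', hA⟩ := pr_root_esub hpr
      rw [hA] at heq
      exact Tm.noConfusion heq
  | ifz E₁ P₁ Q₁ =>
    simp only [fill] at heq
    rcases hr with hcr | hpr
    · cases hcr with
      | beta x M N σ hk => exact Tm.noConfusion heq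
      | pred_zero => exact Tm.noConfusion heq
      | pred_succ n => exact Tm.noConfusion heq
      | ifz_zero M N =>
        injection heq with h1 h2 h3
        exact fill_esub_ne_numeral 0 E₁ (by rw [numeral]; exact h1.symm)
      | ifz_succ n M N =>
        injection heq with h1 h2 h3
        exact fill_esub_ne_numeral (n + 1) E₁ h1.symm
      | fix_unfold M => exact Tm.noConfusion heq
    · obtain ⟨M', x', N', hA⟩ := pr_root_esub hpr
      rw [hA] at heq
      exact Tm.noConfusion heq

lemma bad_stuck {Bt : Tm} (hB : Bad Bt) (E : ECtx) {X : Tm} (h : WhStep (fill E Bt) X) : False := by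
  have hstep : ∃ E' A' B', (CrRedex A' B' ∨ PrRedex A' B') ∧ fill E Bt = fill E' A' := by
    rcases h with ⟨E', A', B', hr, h1, _⟩ | ⟨E', A', B', hr, h1, _⟩
    exacts [⟨E', A', B', .inl hr, h1⟩, ⟨E', A', B', .inr hr, h1⟩]
  obtain ⟨E', A', B', hr, h1⟩ := hstep
  rcases fill_comparable E E' Bt A' h1 with ⟨E₀, h₀⟩ | ⟨E₀, h₀⟩
  · -- h₀ : Bt = fill E₀ A'
    obtain ⟨Mb, xb, Nb, hBt⟩ := bad_esub hB
    cases E₀ with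
    | hole => exact redex_not_bad hr hB ECtx.hole h₀.symm
    | appL E₁ P₁ => rw [hBt] at h₀; simp only [fill] at h₀; exact Tm.noConfusion h₀
    | pred E₁ => rw [hBt] at h₀; simp only [fill] at h₀; exact Tm.noConfusion h₀
    | succ E₁ => rw [hBt] at h₀; simp only [fill] at h₀; exact Tm.noConfusion h₀
    | ifz E₁ P₁ Q₁ => rw [hBt] at h₀; simp only [fill] at h₀; exact Tm.noConfusion h₀
  · exact redex_not_bad hr hB E₀ h₀

/-! ### Computation steps collapse to PCF steps -/

lemma cr_collapse {A B : Tm} (h : CrRedex A B) :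
    PcfRedex (collapse A) (collapse B) ∨ Bad B := by
  cases h with
  | beta x M N σ hk =>
    by_cases hx : x ∈ σ.map Prod.fst
    · right
      intro hnd
      have hs : spineOf (Tm.esub (applySubs M σ) x N) = (spineOf M ++ σ) ++ [(x, N)] := by
        show spineOf (applySubs M σ) ++ [(x, N)] = _
        rw [spineOf_applySubs]
      have hx1 : x ∈ ((spineOf M ++ σ).map Prod.fst) := by simp [hx]
      have hx2 : x ∈ (([(x, N)] : Subs).map Prod.fst) := by simp
      rw [hs, List.map_append, List.nodup_append] at hnd
      exact hnd.2.2 x hx1 x hx2 rfl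
    · left
      have hcol : collapse (applySubs (.lam x M) σ) = .lam x (csub σ (collapse M)) := by
        rw [collapse_applySubs]
        show csub σ (.lam x (collapse M)) = _
        exact csub_lam x σ hx _
      show PcfRedex (.app (collapse (applySubs (.lam x M) σ)) (collapse N))
        (subst x (collapse N) (collapse (applySubs M σ)))
      rw [hcol, collapse_applySubs]
      exact PcfRedex.beta x (csub σ (collapse M)) (collapse N)
  | pred_zero => left; exact PcfRedex.pred_zero
  | pred_succ n =>
    left
    show PcfRedex (.pred (collapse (numeral (n + 1)))) (collapse (numeral n))
    rw [collapse_numeral, collapse_numeral]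
    exact PcfRedex.pred_succ n
  | ifz_zero M N =>
    left
    exact PcfRedex.ifz_zero (collapse B) (collapse N)
  | ifz_succ n M N =>
    left
    show PcfRedex (.ifz (collapse (numeral (n + 1))) (collapse M) (collapse B)) (collapse B)
    rw [collapse_numeral]
    exact PcfRedex.ifz_succ n (collapse M) (collapse B)
  | fix_unfold M =>
    left
    exact PcfRedex.fix_unfold (collapse M)

lemma crStep_collapse {M N : Tm} (h : CrStep M N) :
    PcfStep (collapse M) (collapse N) ∨ ∃ E B, N = fill E B ∧ Bad B := by
  obtain ⟨E, A, B, hr, rfl, rfl⟩ := h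
  rcases cr_collapse hr with hp | hb
  · exact .inl ⟨cE E, collapse A, collapse B, hp, collapse_fill E A, collapse_fill E B⟩
  · exact .inr ⟨E, B, rfl, hb⟩

lemma whSteps_chain (f : ℕ → Tm) (hred : ∀ n, WhStep (f n) (f (n + 1))) (a : ℕ) :
    ∀ n, WhSteps (f a) (f (a + n)) := by
  intro n
  induction n with
  | zero => exact Relation.ReflTransGen.refl
  | succ k ih => exact Relation.ReflTransGen.tail ih (hred (a + k))

end Aux

/-- Along any infinite weak head reduction sequence of EPCF programs, from each
index `i` there is a later index `j` whose collapse is one PCF step away;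
consequently the collapse of the first program has an infinite PCF reduction
path. -/
theorem stmt_12 (f : ℕ → Tm) (hprog : ∀ n, IsProgram (f n))
    (hred : ∀ n, WhStep (f n) (f (n + 1))) :
    (∀ i, ∃ j, i < j ∧ WhSteps (f i) (f j) ∧
      PcfStep (collapse (f i)) (collapse (f j))) ∧
    (∃ g : ℕ → Tm, g 0 = collapse (f 0) ∧ ∀ n, PcfStep (g n) (g (n + 1))) := by
  classical
  have key : ∀ i, ∃ j, i < j ∧ WhSteps (f i) (f j) ∧
      PcfStep (collapse (f i)) (collapse (f j)) := by
    intro i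
    have hex : ∃ n, CrStep (f (i + n)) (f (i + n + 1)) := by
      by_contra hno
      push_neg at hno
      have hPr : ∀ n, PrStep (f (i + n)) (f (i + n + 1)) :=
        fun n => (hred (i + n)).resolve_left (hno n)
      have hdec : ∀ n, W (f (i + n)) + n ≤ W (f i) := by
        intro n
        induction n with
        | zero => simp
        | succ k ih =>
          have h1 := prStep_W (hPr k)
          show W (f (i + k + 1)) + (k + 1) ≤ W (f i)
          omega
      have h1 := hdec (W (f i))
      have h2 := W_pos (f (i + W (f i)))
      omega
    have hcr : CrStep (f (i + Nat.find hex)) (f (i + Nat.find hex + 1)) := Nat.find_spec hex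
    have hpr : ∀ k < Nat.find hex, PrStep (f (i + k)) (f (i + k + 1)) := fun k hk =>
      (hred (i + k)).resolve_left (Nat.find_min hex hk)
    have hcol : ∀ k, k ≤ Nat.find hex → collapse (f (i + k)) = collapse (f i) := by
      intro k
      induction k with
      | zero => intro _; rfl
      | succ m ih =>
        intro hk
        have h1 := prStep_collapse (hpr m (by omega)) (hprog (i + m)).2
        show collapse (f (i + m + 1)) = collapse (f i)
        rw [← h1]
        exact ih (by omega)
    rcases crStep_collapse hcr with hp | ⟨E, Bt, hEq, hbad⟩
    · refine ⟨i + Nat.find hex + 1, by omega, ?_, ?_⟩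
      · exact whSteps_chain f hred i (Nat.find hex + 1)
      · rw [hcol (Nat.find hex) le_rfl] at hp
        exact hp
    · exfalso
      have hnext := hred (i + Nat.find hex + 1)
      rw [hEq] at hnext
      exact bad_stuck hbad E hnext
  refine ⟨key, ?_⟩
  choose jf h1 h2 h3 using key
  exact ⟨fun n => collapse (f (Nat.rec 0 (fun _ k => jf k) n)), rfl, fun n => h3 _⟩
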